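/- If σ is a strategy on a game A ⊸ B and τ is a strategy on B ⊸ C, then the composite relation—the restriction to moves of A and C of the transitive closure of the union of ≤_σ and ≤_τ—satisfies the polarity condition: whenever m < n in the composite, m is an Opponent move and n is a Proponent move of A ⊸ C. -/

import Mathlib

/-!
Games are given by a type of moves `α`, a polarity function `α → Bool`
(`false` = Opponent = −1, `true` = Proponent = +1) and a well-founded partial
order (the causality order).
-/

/-- Disjoint union of two relations on a sum type. -/
def sumRel {α β : Type*} (r : α → α → Prop) (s : β → β → Prop) :
    α ⊕ β → α ⊕ β → Prop
  | Sum.inl a, Sum.inl a' => r a a'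
  | Sum.inr b, Sum.inr b' => s b b'
  | _, _ => False

/-- The causality order of a game: a well-founded partial order. -/
def IsGame {α : Type*} (le : α → α → Prop) : Prop :=
  (∀ a, le a a) ∧ (∀ a b c, le a b → le b c → le a c) ∧
  (∀ a b, le a b → le b a → a = b) ∧
  WellFounded (fun a b => le a b ∧ a ≠ b)

/-- The polarity function of the arrow game `A ⊸ B = A* ⊗ B`: polarities are
inverted on the left component. -/
def arrowPol {α β : Type*} (lamA : α → Bool) (lamB : β → Bool) : α ⊕ β → Bool :=
  Sum.elim (fun a => !(lamA a)) lamB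

/-- The causality order of the tensor game `A ⊗ B` (or of `A ⊸ B`). -/
def tensLe {α β : Type*} (leA : α → α → Prop) (leB : β → β → Prop) :
    α ⊕ β → α ⊕ β → Prop :=
  sumRel leA leB

/-- A strategy on the game `(lam, leG)`: a partial order `les` on moves such
that `m <ₛ n` implies `m` is Opponent and `n` is Proponent (polarity), and the
transitive closure of `les ∪ leG` is still a partial order (acyclicity). -/
def IsStrategy {α : Type*} (lam : α → Bool) (leG : α → α → Prop)
    (les : α → α → Prop) : Prop :=
  (∀ a, les a a) ∧ (∀ a b c, les a b → les b c → les a c) ∧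
  (∀ a b, les a b → les b a → a = b) ∧
  (∀ a b, les a b → a ≠ b → lam a = false ∧ lam b = true) ∧
  (∀ a b, Relation.ReflTransGen (fun x y => les x y ∨ leG x y) a b →
          Relation.ReflTransGen (fun x y => les x y ∨ leG x y) b a → a = b)

/-- Direct image of a relation along a function. -/
def relMap {α β : Type*} (f : α → β) (r : α → α → Prop) : β → β → Prop :=
  fun x y => ∃ a a', r a a' ∧ f a = x ∧ f a' = y

/-- The composite of a strategy `σ` on `A ⊸ B` and a strategy `τ` on `B ⊸ C`:
the restriction to the moves of `A` and `C` of the (reflexive) transitive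
closure of the union of `≤σ` and `≤τ`, both seen as relations on the moves of
`A`, `B` and `C`. -/
def stratComp {α β γ : Type*} (σ : α ⊕ β → α ⊕ β → Prop)
    (τ : β ⊕ γ → β ⊕ γ → Prop) : α ⊕ γ → α ⊕ γ → Prop :=
  fun x y =>
    Relation.ReflTransGen
      (fun u v => relMap (Sum.map id Sum.inl) σ u v ∨ relMap Sum.inr τ u v)
      (Sum.map id Sum.inr x) (Sum.map id Sum.inr y)


private lemma rtg_last_step {α : Type*} {r : α → α → Prop} {x y : α}
    (h : Relation.ReflTransGen r x y) : x ≠ y → ∃ z, r z y ∧ z ≠ y := by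
  induction h with
  | refl => exact fun hxy => absurd rfl hxy
  | @tail b c hxb hbc ih =>
    intro hxy
    by_cases h' : b = c
    · subst h'; exact ih hxy
    · exact ⟨b, hbc, h'⟩

private lemma rtg_first_step {α : Type*} {r : α → α → Prop} {x y : α}
    (h : Relation.ReflTransGen r x y) : x ≠ y → ∃ z, r x z ∧ x ≠ z := by
  intro hxy
  have h' : Relation.ReflTransGen (Function.swap r) y x :=
    (Relation.reflTransGen_swap).mpr h
  obtain ⟨z, hz, hne⟩ := rtg_last_step h' (Ne.symm hxy)
  exact ⟨z, hz, fun e => hne e.symm⟩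
/-- Composing two strategies preserves the polarity condition: whenever
`m < n` in the composite (with `m ≠ n`), `m` is an Opponent move and `n` a
Proponent move of `A ⊸ C`. -/
theorem stratComp_polarity {α β γ : Type*}
    (lamA : α → Bool) (lamB : β → Bool) (lamC : γ → Bool)
    (leA : α → α → Prop) (leB : β → β → Prop) (leC : γ → γ → Prop)
    (hA : IsGame leA) (hB : IsGame leB) (hC : IsGame leC)
    (σ : α ⊕ β → α ⊕ β → Prop) (τ : β ⊕ γ → β ⊕ γ → Prop)
    (hσ : IsStrategy (arrowPol lamA lamB) (tensLe leA leB) σ)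
    (hτ : IsStrategy (arrowPol lamB lamC) (tensLe leB leC) τ) :
    ∀ x y : α ⊕ γ, stratComp σ τ x y → x ≠ y →
      arrowPol lamA lamC x = false ∧ arrowPol lamA lamC y = true := by
  intro x y h hxy
  obtain ⟨_, _, _, hσpol, _⟩ := hσ
  obtain ⟨_, _, _, hτpol, _⟩ := hτ
  have hinj : Function.Injective (Sum.map (@id α) (@Sum.inr β γ)) :=
    Function.injective_id.sumMap Sum.inr_injective
  constructor
  · -- x is Opponent
    obtain ⟨z, hstep, hne⟩ := rtg_first_step h (fun he => hxy (hinj he))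
    cases x with
    | inl a =>
      rcases hstep with ⟨m, m', hs, hm, hm'⟩ | ⟨m, m', ht, hm, hm'⟩
      · -- σ step
        cases m with
        | inl a' =>
          simp only [Sum.map, id] at hm
          injection hm with hm; subst hm
          have hmm' : (Sum.inl a' : α ⊕ β) ≠ m' := by
            rintro rfl; exact hne (by simpa [Sum.map] using hm')
          have := (hσpol _ _ hs hmm').1
          simpa [arrowPol] using this
        | inr b => simp [Sum.map] at hm
      · cases m <;> simp [Sum.map] at hm
    | inr c =>
      rcases hstep with ⟨m, m', hs, hm, hm'⟩ | ⟨m, m', ht, hm, hm'⟩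
      · cases m <;> simp [Sum.map] at hm
      · -- τ step
        injection hm with hm
        subst hm
        have hmm' : (Sum.inr c : β ⊕ γ) ≠ m' := by
          rintro rfl; exact hne (by simpa [Sum.map] using hm')
        have := (hτpol _ _ ht hmm').1
        simpa [arrowPol] using this
  · -- y is Proponent
    obtain ⟨z, hstep, hne⟩ := rtg_last_step h (fun he => hxy (hinj he))
    cases y with
    | inl a =>
      rcases hstep with ⟨m, m', hs, hm, hm'⟩ | ⟨m, m', ht, hm, hm'⟩
      · cases m' with
        | inl a' =>
          simp only [Sum.map, id] at hm'
          injection hm' with hm'; subst hm'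
          have hmm' : m ≠ (Sum.inl a' : α ⊕ β) := by
            rintro rfl; exact hne (by simpa [Sum.map] using hm.symm)
          have := (hσpol _ _ hs hmm').2
          simpa [arrowPol] using this
        | inr b => simp [Sum.map] at hm'
      · cases m' <;> simp [Sum.map] at hm'
    | inr c =>
      rcases hstep with ⟨m, m', hs, hm, hm'⟩ | ⟨m, m', ht, hm, hm'⟩
      · cases m' <;> simp [Sum.map] at hm'
      · injection hm' with hm'
        subst hm'
        have hmm' : m ≠ (Sum.inr c : β ⊕ γ) := by
          rintro rfl; exact hne (by simpa [Sum.map] using hm.symm)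
        have := (hτpol _ _ ht hmm').2
        simpa [arrowPol] using this
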